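/- For scalar positive bounded and coercive spectral densities Φ and Ψ on the unit circle, lim_{α→1} S_A^{(α)}(Φ‖Ψ) = S_KL(Φ‖Ψ), where S_KL is the Kullback–Leibler divergence ∫ [Φ(log Φ − log Ψ) − Φ + Ψ]. -/

import Mathlib

open MeasureTheory Real Filter Topology

instance : Fact (0 < 2 * π) := ⟨by positivity⟩

/-- The normalized Lebesgue measure on the unit circle (parametrized as `AddCircle (2π)`). -/
noncomputable def μc : Measure (AddCircle (2 * π)) := (ENNReal.ofReal (2 * π))⁻¹ • (volume : Measure (AddCircle (2 * π)))

section Aux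

private lemma deriv_aux (a b : ℝ) (t : ℝ) :
    HasDerivAt (fun s : ℝ => Real.exp (Real.log a * s + Real.log b * (1 - s)))
      (Real.exp (Real.log a * t + Real.log b * (1 - t)) * (Real.log a - Real.log b)) t := by
  have h1 : HasDerivAt (fun s : ℝ => Real.log a * s + Real.log b * (1 - s))
      (Real.log a - Real.log b) t := by
    have ha' : HasDerivAt (fun s : ℝ => Real.log a * s) (Real.log a) t := by
      simpa using (hasDerivAt_id t).const_mul (Real.log a)
    have hb' : HasDerivAt (fun s : ℝ => Real.log b * (1 - s)) (-Real.log b) t := by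
      simpa using ((hasDerivAt_const t (1 : ℝ)).sub (hasDerivAt_id t)).const_mul (Real.log b)
    simpa [sub_eq_add_neg] using ha'.fun_add hb'
  simpa using h1.exp

private lemma rpow_exp_aux (a b : ℝ) (ha : 0 < a) (hb : 0 < b) (α : ℝ) :
    a ^ α * b ^ (1 - α) = Real.exp (Real.log a * α + Real.log b * (1 - α)) := by
  rw [Real.rpow_def_of_pos ha, Real.rpow_def_of_pos hb, ← Real.exp_add]

private lemma ptwise_tendsto (a b : ℝ) (ha : 0 < a) (hb : 0 < b) :
    Tendsto (fun α : ℝ => 1 / (α * (α - 1)) * a ^ α * b ^ (1 - α) - 1 / (α - 1) * a + 1 / α * b)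
      (𝓝[≠] (1 : ℝ)) (𝓝 (a * (Real.log a - Real.log b) - a + b)) := by
  set f : ℝ → ℝ := fun t => Real.exp (Real.log a * t + Real.log b * (1 - t)) with hfdef
  have hf1 : f 1 = a := by simp [f, Real.exp_log ha]
  have hslope : Tendsto (slope f 1) (𝓝[≠] (1 : ℝ)) (𝓝 (a * (Real.log a - Real.log b))) := by
    have h := hasDerivAt_iff_tendsto_slope.mp (deriv_aux a b 1)
    simpa [hfdef, Real.exp_log ha] using h
  have hfc : Continuous f := by fun_prop
  have hcont : Tendsto (fun α : ℝ => (b - f α) / α) (𝓝[≠] (1 : ℝ)) (𝓝 (b - a)) := by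
    have hc : ContinuousAt (fun α : ℝ => (b - f α) / α) 1 :=
      ((continuous_const.sub hfc).continuousAt).div continuousAt_id one_ne_zero
    have h2 : Tendsto (fun α : ℝ => (b - f α) / α) (𝓝[≠] (1 : ℝ)) (𝓝 ((b - f 1) / 1)) :=
      hc.tendsto.mono_left nhdsWithin_le_nhds
    simpa [hf1] using h2
  have key := hslope.add hcont
  have heq : a * (Real.log a - Real.log b) - a + b
      = a * (Real.log a - Real.log b) + (b - a) := by ring
  rw [heq]
  refine Tendsto.congr' ?_ key
  have h0 : ∀ᶠ α : ℝ in 𝓝[≠] (1 : ℝ), α ≠ 0 :=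
    Filter.Eventually.filter_mono nhdsWithin_le_nhds (eventually_ne_nhds one_ne_zero)
  filter_upwards [self_mem_nhdsWithin, h0] with α hα1 hα0
  have hα1' : α ≠ 1 := hα1
  have hfa : f α = a ^ α * b ^ (1 - α) := (rpow_exp_aux a b ha hb α).symm
  rw [slope_def_field, hf1, hfa]
  have h1 : α - 1 ≠ 0 := sub_ne_zero.mpr hα1'
  field_simp
  ring

private lemma bound_aux (a b α L : ℝ) (ha : 0 < a) (hb : 0 < b)
    (hla : |Real.log a| ≤ L) (hlb : |Real.log b| ≤ L)
    (hα : α ∈ Set.Icc (1 / 2 : ℝ) (3 / 2)) (hα1 : α ≠ 1) :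
    |1 / (α * (α - 1)) * a ^ α * b ^ (1 - α) - 1 / (α - 1) * a + 1 / α * b|
      ≤ Real.exp (2 * L) * (2 * L) + 2 * (Real.exp L + Real.exp (2 * L)) := by
  have hL0 : 0 ≤ L := le_trans (abs_nonneg _) hla
  set f : ℝ → ℝ := fun t => Real.exp (Real.log a * t + Real.log b * (1 - t)) with hfdef
  have hf1 : f 1 = a := by simp [f, Real.exp_log ha]
  have hα0 : α ≠ 0 := by
    have := hα.1; intro h; rw [h] at this; linarith
  have h1 : α - 1 ≠ 0 := sub_ne_zero.mpr hα1
  -- bound on |f t| on the interval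
  have hfb : ∀ t ∈ Set.Icc (1 / 2 : ℝ) (3 / 2), |f t| ≤ Real.exp (2 * L) := by
    intro t ht
    have ht1 : |t| ≤ 3 / 2 := abs_le.mpr ⟨by linarith [ht.1], ht.2⟩
    have ht2 : |1 - t| ≤ 1 / 2 := abs_le.mpr ⟨by linarith [ht.2], by linarith [ht.1]⟩
    have harg : Real.log a * t + Real.log b * (1 - t) ≤ 2 * L := by
      have e1 : Real.log a * t ≤ |Real.log a| * |t| := by
        rw [← abs_mul]; exact le_abs_self _
      have e2 : Real.log b * (1 - t) ≤ |Real.log b| * |1 - t| := by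
        rw [← abs_mul]; exact le_abs_self _
      have e3 : |Real.log a| * |t| ≤ L * (3 / 2) :=
        mul_le_mul hla ht1 (abs_nonneg _) hL0
      have e4 : |Real.log b| * |1 - t| ≤ L * (1 / 2) :=
        mul_le_mul hlb ht2 (abs_nonneg _) hL0
      nlinarith
    have : f t ≤ Real.exp (2 * L) := Real.exp_le_exp.mpr harg
    rwa [abs_of_pos (Real.exp_pos _)]
  -- MVT bound
  have hder : ∀ t ∈ Set.Icc (1 / 2 : ℝ) (3 / 2),
      HasDerivWithinAt f (f t * (Real.log a - Real.log b)) (Set.Icc (1 / 2 : ℝ) (3 / 2)) t :=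
    fun t _ => (deriv_aux a b t).hasDerivWithinAt
  have hbound : ∀ t ∈ Set.Icc (1 / 2 : ℝ) (3 / 2),
      ‖f t * (Real.log a - Real.log b)‖ ≤ Real.exp (2 * L) * (2 * L) := by
    intro t ht
    rw [Real.norm_eq_abs, abs_mul]
    have h2 : |Real.log a - Real.log b| ≤ 2 * L := by
      calc |Real.log a - Real.log b| ≤ |Real.log a| + |Real.log b| := abs_sub _ _
        _ ≤ 2 * L := by linarith
    exact mul_le_mul (hfb t ht) h2 (abs_nonneg _) (le_of_lt (Real.exp_pos _))
  have h1mem : (1 : ℝ) ∈ Set.Icc (1 / 2 : ℝ) (3 / 2) := by norm_num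
  have hmvt := (convex_Icc (1 / 2 : ℝ) (3 / 2)).norm_image_sub_le_of_norm_hasDerivWithin_le
    hder hbound h1mem hα
  rw [Real.norm_eq_abs, Real.norm_eq_abs, hf1] at hmvt
  -- rewrite the expression
  have hexpr : 1 / (α * (α - 1)) * a ^ α * b ^ (1 - α) - 1 / (α - 1) * a + 1 / α * b
      = (f α - a) / (α - 1) + (b - f α) / α := by
    have hfa : f α = a ^ α * b ^ (1 - α) := (rpow_exp_aux a b ha hb α).symm
    rw [hfa]
    field_simp
    ring
  rw [hexpr]
  have habsα : (1 / 2 : ℝ) ≤ |α| := le_trans hα.1 (le_abs_self α)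
  have hterm1 : |(f α - a) / (α - 1)| ≤ Real.exp (2 * L) * (2 * L) := by
    rw [abs_div]
    rw [div_le_iff₀ (abs_pos.mpr h1)]
    exact hmvt
  have hterm2 : |(b - f α) / α| ≤ 2 * (Real.exp L + Real.exp (2 * L)) := by
    rw [abs_div, div_le_iff₀ (lt_of_lt_of_le (by norm_num) habsα)]
    have hb' : |b| ≤ Real.exp L := by
      rw [abs_of_pos hb, ← Real.exp_log hb]
      exact Real.exp_le_exp.mpr (le_trans (le_abs_self _) hlb)
    have hf' : |f α| ≤ Real.exp (2 * L) := hfb α hα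
    have : |b - f α| ≤ Real.exp L + Real.exp (2 * L) := by
      calc |b - f α| ≤ |b| + |f α| := abs_sub _ _
        _ ≤ Real.exp L + Real.exp (2 * L) := add_le_add hb' hf'
    nlinarith [Real.exp_pos L, Real.exp_pos (2 * L)]
  calc |(f α - a) / (α - 1) + (b - f α) / α|
      ≤ |(f α - a) / (α - 1)| + |(b - f α) / α| := abs_add_le _ _
    _ ≤ Real.exp (2 * L) * (2 * L) + 2 * (Real.exp L + Real.exp (2 * L)) :=
        add_le_add hterm1 hterm2

instance : IsFiniteMeasure μc := by
  constructor
  rw [μc, Measure.smul_apply, smul_eq_mul, AddCircle.measure_univ]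
  exact ENNReal.mul_lt_top (ENNReal.inv_lt_top.mpr (by simp [Real.pi_pos])) ENNReal.ofReal_lt_top

end Aux

/-- the Alpha divergence tends to the Kullback–Leibler divergence
`S_KL(Φ‖Ψ)` as α → 1. -/
theorem alpha_divergence_limit_one
    (Φ Ψ : AddCircle (2 * π) → ℝ) (hΦm : Measurable Φ) (hΨm : Measurable Ψ)
    (k₁ k₂ : ℝ) (hk₁ : 0 < k₁)
    (hΦ : ∀ x, k₁ ≤ Φ x ∧ Φ x ≤ k₂) (hΨ : ∀ x, k₁ ≤ Ψ x ∧ Ψ x ≤ k₂) :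
    Tendsto (fun α : ℝ => ∫ x, (1 / (α * (α - 1)) * Φ x ^ α * Ψ x ^ (1 - α) - 1 / (α - 1) * Φ x + 1 / α * Ψ x) ∂μc)
      (𝓝[≠] (1 : ℝ)) (𝓝 (∫ x, (Φ x * (Real.log (Φ x) - Real.log (Ψ x)) - Φ x + Ψ x) ∂μc)) := by
  set L : ℝ := max |Real.log k₁| |Real.log k₂| with hLdef
  have hlog : ∀ y : ℝ, k₁ ≤ y → y ≤ k₂ → |Real.log y| ≤ L := by
    intro y h1 h2
    refine abs_le.mpr ⟨?_, ?_⟩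
    · have : Real.log k₁ ≤ Real.log y := Real.log_le_log hk₁ h1
      have h3 : -|Real.log k₁| ≤ Real.log k₁ := neg_abs_le _
      have h4 : |Real.log k₁| ≤ L := le_max_left _ _
      linarith
    · have : Real.log y ≤ Real.log k₂ := Real.log_le_log (lt_of_lt_of_le hk₁ h1) h2
      have h4 : |Real.log k₂| ≤ L := le_max_right _ _
      have h5 : Real.log k₂ ≤ |Real.log k₂| := le_abs_self _
      linarith
  apply tendsto_integral_filter_of_dominated_convergence
    (fun _ => Real.exp (2 * L) * (2 * L) + 2 * (Real.exp L + Real.exp (2 * L)))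
  · filter_upwards with α
    have heq : (fun x => 1 / (α * (α - 1)) * Φ x ^ α * Ψ x ^ (1 - α) - 1 / (α - 1) * Φ x + 1 / α * Ψ x)
        = fun x => 1 / (α * (α - 1)) *
            Real.exp (Real.log (Φ x) * α + Real.log (Ψ x) * (1 - α))
            - 1 / (α - 1) * Φ x + 1 / α * Ψ x := by
      funext x
      rw [mul_assoc, rpow_exp_aux (Φ x) (Ψ x) (lt_of_lt_of_le hk₁ (hΦ x).1)
        (lt_of_lt_of_le hk₁ (hΨ x).1) α]
    rw [heq]
    exact ((((measurable_const.mul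
      (Real.measurable_exp.comp ((hΦm.log.mul measurable_const).add
        (hΨm.log.mul measurable_const)))).sub (measurable_const.mul hΦm)).add
      (measurable_const.mul hΨm))).aestronglyMeasurable
  · have hIcc : ∀ᶠ α : ℝ in 𝓝[≠] (1 : ℝ), α ∈ Set.Icc (1 / 2 : ℝ) (3 / 2) := by
      apply Filter.Eventually.filter_mono nhdsWithin_le_nhds
      exact Icc_mem_nhds (by norm_num) (by norm_num)
    filter_upwards [hIcc, self_mem_nhdsWithin] with α hα hα1
    filter_upwards with x
    rw [Real.norm_eq_abs]
    exact bound_aux (Φ x) (Ψ x) α L (lt_of_lt_of_le hk₁ (hΦ x).1)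
      (lt_of_lt_of_le hk₁ (hΨ x).1) (hlog _ (hΦ x).1 (hΦ x).2)
      (hlog _ (hΨ x).1 (hΨ x).2) hα hα1
  · exact integrable_const _
  · filter_upwards with x
    exact ptwise_tendsto (Φ x) (Ψ x) (lt_of_lt_of_le hk₁ (hΦ x).1)
      (lt_of_lt_of_le hk₁ (hΨ x).1)
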